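/- Let X and X' be vertex-disjoint k-regular simple graphs, uv an edge of X, u'v' an edge of X', and let Y be the insertion of X' − u'v' into the edge uv of X. If L(X) has a Hamilton decomposition H that is Euler tour compatible at the vertex uv, and L(X') has a Hamilton decomposition H' that is Euler tour compatible at u'v', then L(Y) has a Hamilton decomposition H*; moreover, for any vertex xy ≠ uv of L(X) at which H is Euler tour compatible, H* is also Euler tour compatible at xy. -/

import Mathlib

open SimpleGraph
open scoped Classical

universe u v'

variable {V : Type*}

/-- `G` is regular of degree `k`. -/
def RegularDeg (G : SimpleGraph V) (k : ℕ) : Prop :=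
  ∀ v, Nat.card (G.neighborSet v) = k

/-- A family of `n` pairwise edge-disjoint Hamilton cycles in `G`. -/
def IsHamDecompFam (G : SimpleGraph V) {n : ℕ} (x : Fin n → V)
    (c : ∀ i, G.Walk (x i) (x i)) : Prop :=
  (∀ i, (c i).IsHamiltonianCycle) ∧
    ∀ i j, i ≠ j → ∀ e, e ∈ (c i).edges → e ∉ (c j).edges

/-- `G` contains `n` pairwise edge-disjoint Hamilton cycles. -/
def EdgeDisjointHamCycles (G : SimpleGraph V) (n : ℕ) : Prop :=
  ∃ (x : Fin n → V) (c : ∀ i, G.Walk (x i) (x i)), IsHamDecompFam G x c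

/-- A graph regular of degree `2k` or `2k+1` is Hamilton decomposable if it contains a set of
`k` pairwise edge-disjoint Hamilton cycles. -/
def HamiltonDecomposable (G : SimpleGraph V) : Prop :=
  ∃ k : ℕ, (RegularDeg G (2 * k) ∨ RegularDeg G (2 * k + 1)) ∧ EdgeDisjointHamCycles G k

/-- A multigraph: a vertex type, an edge type, and an assignment of (unordered) endpoints. -/
structure Multigraph : Type (max (u + 1) (v' + 1)) where
  V : Type u
  E : Type v'
  ends : E → Sym2 V

namespace Multigraph

variable (M : Multigraph)

/-- `M` has no loops. -/
def Loopless : Prop := ∀ e, ¬ (M.ends e).IsDiag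

/-- The degree of a vertex of a (loopless) multigraph: number of incident edges. -/
noncomputable def deg (v : M.V) : ℕ := Nat.card {e : M.E // v ∈ M.ends e}

/-- `M` is `k`-regular. -/
def Regular (k : ℕ) : Prop := ∀ v, M.deg v = k

/-- The underlying simple graph of `M`: adjacency given by existence of a connecting edge. -/
def toSG : SimpleGraph M.V where
  Adj x y := x ≠ y ∧ ∃ e, M.ends e = s(x, y)
  symm := ⟨by
    rintro x y ⟨hxy, e, he⟩
    exact ⟨hxy.symm, e, he.trans (Sym2.eq_swap)⟩⟩
  loopless := ⟨fun x h => h.1 rfl⟩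

/-- `M` is connected. -/
def Connected : Prop := M.toSG.Connected

/-- The line graph of a multigraph: vertices are edges, adjacency is sharing an endpoint. -/
def lineSG : SimpleGraph M.E where
  Adj e f := e ≠ f ∧ ∃ w, w ∈ M.ends e ∧ w ∈ M.ends f
  symm := ⟨by rintro e f ⟨hef, w, h1, h2⟩; exact ⟨hef.symm, w, h2, h1⟩⟩
  loopless := ⟨fun e h => h.1 rfl⟩

/-- A transition at a vertex `u`: a pair of (distinct) half-edges incident with `u`
(in a loopless multigraph, a pair of distinct edges incident with `u`). -/
structure Transition (M : Multigraph) where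
  u : M.V
  e₁ : M.E
  e₂ : M.E
  ne : e₁ ≠ e₂
  mem₁ : u ∈ M.ends e₁
  mem₂ : u ∈ M.ends e₂

/-- Endpoints of edges after splitting the vertex `t.u` into two vertices: the new vertex
`Sum.inr ()` receives the two half-edges of the transition `t`, and `Sum.inl t.u` keeps the
remaining half-edges at `t.u`. -/
noncomputable def splitEnds (t : M.Transition) (e : M.E) : Sym2 (M.V ⊕ Unit) :=
  if e = t.e₁ ∨ e = t.e₂ then
    Sym2.map (fun w => if w = t.u then Sum.inr () else Sum.inl w) (M.ends e)
  else Sym2.map Sum.inl (M.ends e)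

/-- The multigraph `M^t` obtained by splitting at the transition `t`. -/
noncomputable def split (t : M.Transition) : Multigraph where
  V := M.V ⊕ Unit
  E := M.E
  ends := M.splitEnds t

/-- A transition is separating if splitting at it increases the number of
connected components. -/
def IsSeparating (t : M.Transition) : Prop :=
  Nat.card (M.split t).toSG.ConnectedComponent > Nat.card M.toSG.ConnectedComponent

end Multigraph

/-- The multigraph underlying a simple graph. -/
def SimpleGraph.toMulti (G : SimpleGraph V) : Multigraph := ⟨V, G.edgeSet, Subtype.val⟩

/-- `G` has no separating transitions. -/
def NoSeparatingTransition (G : SimpleGraph V) : Prop :=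
  ∀ t : Multigraph.Transition G.toMulti, ¬ G.toMulti.IsSeparating t

/-- A Hamilton cycle `c` of `L(X)` is *Euler tour compatible at* the vertex `E = uv` of `L(X)`
if one of the two neighbours of `E` on `c` lies in the `u`-neighbourhood of `E` (the edges of
`X` at `u` other than `E`) and the other lies in the `v`-neighbourhood of `E`. -/
def CompatAt {W : Type*} {X : SimpleGraph W} {a : X.edgeSet} (c : X.lineGraph.Walk a a)
    (E : X.edgeSet) (u v : W) : Prop :=
  ∃ f g : X.edgeSet, f ≠ g ∧ {h : X.edgeSet | s(E, h) ∈ c.edges} = {f, g} ∧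
    u ∈ (f : Sym2 W) ∧ v ∈ (g : Sym2 W)

/-- The insertion of `X' - u'v'` into the edge `uv` of `X`: in the disjoint union, the edges
`uv` and `u'v'` are replaced by edges `uu'` and `vv'`. -/
def insertSimple {W W' : Type*} (X : SimpleGraph W) (X' : SimpleGraph W')
    (u v : W) (u' v' : W') : SimpleGraph (W ⊕ W') :=
  SimpleGraph.fromEdgeSet
    ((Sym2.map Sum.inl '' (X.edgeSet \ {s(u, v)})) ∪
      (Sym2.map Sum.inr '' (X'.edgeSet \ {s(u', v')})) ∪
      {s(Sum.inl u, Sum.inr u'), s(Sum.inl v, Sum.inr v')})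

section Aux
variable {A : Type*} {G : SimpleGraph A}

lemma aux_cycle_decomp {a : A} {c : G.Walk a a} (hc : c.IsHamiltonianCycle) (E : A) :
    ∃ (s t : A) (p : G.Walk s t), p.IsPath ∧ E ∉ p.support ∧ (∀ x, x ≠ E → x ∈ p.support) ∧
      s ≠ t ∧ ∀ e, e ∈ c.edges ↔ e = s(E, s) ∨ e ∈ p.edges ∨ e = s(E, t) := by
  classical
  have hE : E ∈ c.support := hc.mem_support E
  have hcyc : (c.rotate E hE).IsCycle := hc.isCycle.rotate hE
  have hall : ∀ x, x ∈ (c.rotate E hE).support.tail := by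
    intro x
    have h1 : x ∈ c.support.tail := by
      have := hc.isHamiltonian_tail.mem_support x
      rwa [Walk.support_tail_of_not_nil c hc.isCycle.not_nil] at this
    exact ((c.support_rotate E hE).mem_iff).mpr h1
  have hedges : ∀ e, e ∈ (c.rotate E hE).edges ↔ e ∈ c.edges := fun e => (c.rotate_edges E hE).mem_iff
  obtain ⟨s, h1, q, hq⟩ := Walk.not_nil_iff.mp hcyc.not_nil
  have hEs : E ≠ s := G.ne_of_adj h1
  have hqrev : ¬ q.reverse.Nil := Walk.not_nil_of_ne hEs
  obtain ⟨t, h2, r, hr⟩ := Walk.not_nil_iff.mp hqrev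
  have hq2 : q = r.reverse.append (Walk.cons h2.symm Walk.nil) := by
    rw [← Walk.reverse_reverse q, hr, Walk.reverse_cons]
  set p : G.Walk s t := r.reverse with hpdef
  have hsupp : (c.rotate E hE).support = E :: (p.support ++ [E]) := by
    rw [hq, hq2, Walk.support_cons, Walk.support_append, Walk.support_cons, Walk.support_nil]
    rfl
  have hedg : (c.rotate E hE).edges = s(E, s) :: (p.edges ++ [s(t, E)]) := by
    rw [hq, hq2, Walk.edges_cons, Walk.edges_append, Walk.edges_cons, Walk.edges_nil]
  have htail : ((c.rotate E hE).support.tail).Nodup := hcyc.support_nodup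
  rw [hsupp] at htail
  simp only [List.tail_cons, List.nodup_append] at htail
  have hpsupnd : p.support.Nodup := htail.1
  have hEnotp : E ∉ p.support := by
    intro hmem
    exact htail.2.2 E hmem E (by simp) rfl
  have htrail : (c.rotate E hE).edges.Nodup := hcyc.isTrail.edges_nodup
  rw [hedg] at htrail
  have hst : s ≠ t := by
    intro h
    subst h
    simp only [List.nodup_cons, List.mem_append, List.mem_singleton] at htrail
    exact htrail.1 (Or.inr (Sym2.eq_swap))
  refine ⟨s, t, p, SimpleGraph.Walk.IsPath.mk' hpsupnd, hEnotp, ?_, hst, ?_⟩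
  · intro x hx
    have := hall x
    rw [hsupp] at this
    simp only [List.tail_cons, List.mem_append, List.mem_singleton] at this
    tauto
  · intro e
    rw [← hedges, hedg]
    have hsw : s(t, E) = s(E, t) := Sym2.eq_swap
    simp only [List.mem_cons, List.mem_append, List.mem_singleton, List.not_mem_nil, or_false,
      hsw]

lemma aux_orient {a : A} {c : G.Walk a a} (hc : c.IsHamiltonianCycle) {E f g : A}
    (hfg : f ≠ g) (hset : {h | s(E, h) ∈ c.edges} = {f, g}) :
    ∃ p : G.Walk f g, p.IsPath ∧ E ∉ p.support ∧ (∀ x, x ≠ E → x ∈ p.support) ∧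
      ∀ e, e ∈ c.edges ↔ e = s(E, f) ∨ e ∈ p.edges ∨ e = s(E, g) := by
  obtain ⟨s, t, p, hp, hEp, hcov, hst, hiff⟩ := aux_cycle_decomp hc E
  have hs : s ∈ ({f, g} : Set A) := by
    rw [← hset]; exact (hiff _).mpr (Or.inl rfl)
  have ht : t ∈ ({f, g} : Set A) := by
    rw [← hset]; exact (hiff _).mpr (Or.inr (Or.inr rfl))
  simp only [Set.mem_insert_iff, Set.mem_singleton_iff] at hs ht
  rcases hs with hs | hs
  · have htg : t = g := by
      rcases ht with h | h
      · exact absurd (hs.trans h.symm) hst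
      · exact h
    subst hs; subst htg
    exact ⟨p, hp, hEp, hcov, hiff⟩
  · have htf : t = f := by
      rcases ht with h | h
      · exact h
      · exact absurd (hs.trans h.symm) hst
    subst hs; subst htf
    refine ⟨p.reverse, hp.reverse, ?_, ?_, ?_⟩
    · rwa [Walk.support_reverse, List.mem_reverse]
    · intro x hx; rw [Walk.support_reverse, List.mem_reverse]; exact hcov x hx
    · intro e
      rw [Walk.edges_reverse, List.mem_reverse]
      rw [hiff e]; tauto

lemma aux_mapWalk {B : Type*} {G' : SimpleGraph B} (φ : A → B) (T : Set A)
    (hT : ∀ x ∈ T, ∀ y ∈ T, G.Adj x y → G'.Adj (φ x) (φ y)) :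
    ∀ {a b : A} (w : G.Walk a b), (∀ x ∈ w.support, x ∈ T) →
      ∃ w' : G'.Walk (φ a) (φ b), w'.support = w.support.map φ ∧
        w'.edges = w.edges.map (Sym2.map φ) := by
  intro a b w
  induction w with
  | nil => intro _; exact ⟨.nil, rfl, rfl⟩
  | @cons a x b h p ih =>
    intro hT'
    have ha : a ∈ T := hT' _ (by simp)
    have hx : x ∈ T := hT' _ (by simp [Walk.support_cons])
    obtain ⟨w', hs, he⟩ := ih (fun y hy => hT' y (by simp [Walk.support_cons, hy]))
    exact ⟨.cons (hT _ ha _ hx h) w', by simp [Walk.support_cons, hs],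
      by simp [Walk.edges_cons, he, Sym2.map_pair_eq]⟩

end Aux


section Ins
variable {W W' : Type*} (X : SimpleGraph W) (X' : SimpleGraph W') (u v : W) (u' v' : W')

lemma left_ne_mixed (e : Sym2 W) (x : W) (y : W') :
    Sym2.map Sum.inl e ≠ s(Sum.inl x, (Sum.inr y : W ⊕ W')) := by
  intro h
  have : (Sum.inr y : W ⊕ W') ∈ Sym2.map Sum.inl e := h ▸ (by simp)
  rw [Sym2.mem_map] at this
  obtain ⟨a, -, ha⟩ := this
  exact Sum.inl_ne_inr ha

lemma right_ne_mixed (e : Sym2 W') (x : W) (y : W') :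
    Sym2.map Sum.inr e ≠ s(Sum.inl x, (Sum.inr y : W ⊕ W')) := by
  intro h
  have : (Sum.inl x : W ⊕ W') ∈ Sym2.map Sum.inr e := h ▸ (by simp)
  rw [Sym2.mem_map] at this
  obtain ⟨a, -, ha⟩ := this
  exact Sum.inl_ne_inr ha.symm

lemma left_ne_right (e : Sym2 W) (e' : Sym2 W') :
    Sym2.map Sum.inl e ≠ (Sym2.map Sum.inr e' : Sym2 (W ⊕ W')) := by
  induction e using Sym2.ind with
  | _ a b =>
    intro h
    have : (Sum.inl a : W ⊕ W') ∈ Sym2.map Sum.inr e' := by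
      rw [← h]; simp [Sym2.map_pair_eq]
    rw [Sym2.mem_map] at this
    obtain ⟨z, -, hz⟩ := this
    exact Sum.inl_ne_inr hz.symm

lemma left_inj : Function.Injective (Sym2.map (Sum.inl : W → W ⊕ W')) :=
  Sym2.map.injective Sum.inl_injective

lemma right_inj : Function.Injective (Sym2.map (Sum.inr : W' → W ⊕ W')) :=
  Sym2.map.injective Sum.inr_injective

lemma mem_Y_iff (e : Sym2 (W ⊕ W')) :
    e ∈ (insertSimple X X' u v u' v').edgeSet ↔
      (∃ e₀ ∈ X.edgeSet, e₀ ≠ s(u, v) ∧ e = Sym2.map Sum.inl e₀) ∨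
      (∃ e₀ ∈ X'.edgeSet, e₀ ≠ s(u', v') ∧ e = Sym2.map Sum.inr e₀) ∨
      e = s(Sum.inl u, Sum.inr u') ∨ e = s(Sum.inl v, Sum.inr v') := by
  rw [insertSimple, edgeSet_fromEdgeSet, Set.mem_diff]
  constructor
  · rintro ⟨hmem, -⟩
    simp only [Set.mem_union, Set.mem_image, Set.mem_diff, Set.mem_singleton_iff,
      Set.mem_insert_iff] at hmem
    rcases hmem with (⟨e₀, ⟨h1, h2⟩, h3⟩ | ⟨e₀, ⟨h1, h2⟩, h3⟩) | (h | h)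
    · exact Or.inl ⟨e₀, h1, h2, h3.symm⟩
    · exact Or.inr (Or.inl ⟨e₀, h1, h2, h3.symm⟩)
    · exact Or.inr (Or.inr (Or.inl h))
    · exact Or.inr (Or.inr (Or.inr h))
  · intro h
    constructor
    · simp only [Set.mem_union, Set.mem_image, Set.mem_diff, Set.mem_singleton_iff,
        Set.mem_insert_iff]
      rcases h with ⟨e₀, h1, h2, h3⟩ | ⟨e₀, h1, h2, h3⟩ | h | h
      · exact Or.inl (Or.inl ⟨e₀, ⟨h1, h2⟩, h3.symm⟩)
      · exact Or.inl (Or.inr ⟨e₀, ⟨h1, h2⟩, h3.symm⟩)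
      · exact Or.inr (Or.inl h)
      · exact Or.inr (Or.inr h)
    · simp only [Sym2.mem_diagSet]
      rcases h with ⟨e₀, h1, h2, h3⟩ | ⟨e₀, h1, h2, h3⟩ | h | h
      · rw [h3, Sym2.isDiag_map Sum.inl_injective]
        exact X.not_isDiag_of_mem_edgeSet h1
      · rw [h3, Sym2.isDiag_map Sum.inr_injective]
        exact X'.not_isDiag_of_mem_edgeSet h1
      · rw [h]; simp
      · rw [h]; simp

lemma A_mem : s(Sum.inl u, (Sum.inr u' : W ⊕ W')) ∈ (insertSimple X X' u v u' v').edgeSet := by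
  rw [mem_Y_iff]; tauto

lemma B_mem : s(Sum.inl v, (Sum.inr v' : W ⊕ W')) ∈ (insertSimple X X' u v u' v').edgeSet := by
  rw [mem_Y_iff]; tauto

lemma left_mem (e₀ : Sym2 W) (he : e₀ ∈ X.edgeSet) (hne : e₀ ≠ s(u, v)) :
    Sym2.map Sum.inl e₀ ∈ (insertSimple X X' u v u' v').edgeSet := by
  rw [mem_Y_iff]; exact Or.inl ⟨e₀, he, hne, rfl⟩

lemma right_mem (e₀ : Sym2 W') (he : e₀ ∈ X'.edgeSet) (hne : e₀ ≠ s(u', v')) :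
    Sym2.map Sum.inr e₀ ∈ (insertSimple X X' u v u' v').edgeSet := by
  rw [mem_Y_iff]; exact Or.inr (Or.inl ⟨e₀, he, hne, rfl⟩)

/-- the two new edges as vertices of L(Y) -/
noncomputable def eA : (insertSimple X X' u v u' v').edgeSet := ⟨_, A_mem X X' u v u' v'⟩
noncomputable def eB : (insertSimple X X' u v u' v').edgeSet := ⟨_, B_mem X X' u v u' v'⟩

/-- map X-edges into Y-edges (uv mapped to junk eA) -/
noncomputable def phiL (h : X.edgeSet) : (insertSimple X X' u v u' v').edgeSet :=
  if hh : (h : Sym2 W) = s(u, v) then eA X X' u v u' v'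
  else ⟨Sym2.map Sum.inl h, left_mem X X' u v u' v' _ h.2 hh⟩

noncomputable def phiR (h : X'.edgeSet) : (insertSimple X X' u v u' v').edgeSet :=
  if hh : (h : Sym2 W') = s(u', v') then eA X X' u v u' v'
  else ⟨Sym2.map Sum.inr h, right_mem X X' u v u' v' _ h.2 hh⟩

variable {X X' u v u' v'}

lemma phiL_val {h : X.edgeSet} (hh : (h : Sym2 W) ≠ s(u, v)) :
    (phiL X X' u v u' v' h : Sym2 (W ⊕ W')) = Sym2.map Sum.inl h := by
  rw [phiL, dif_neg hh]

lemma phiR_val {h : X'.edgeSet} (hh : (h : Sym2 W') ≠ s(u', v')) :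
    (phiR X X' u v u' v' h : Sym2 (W ⊕ W')) = Sym2.map Sum.inr h := by
  rw [phiR, dif_neg hh]

lemma phiL_ne_A {h : X.edgeSet} (hh : (h : Sym2 W) ≠ s(u, v)) :
    phiL X X' u v u' v' h ≠ eA X X' u v u' v' := by
  intro hcon
  have := congrArg Subtype.val hcon
  rw [phiL_val hh] at this
  exact left_ne_mixed _ u u' this

lemma phiL_ne_B {h : X.edgeSet} (hh : (h : Sym2 W) ≠ s(u, v)) :
    phiL X X' u v u' v' h ≠ eB X X' u v u' v' := by
  intro hcon
  have := congrArg Subtype.val hcon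
  rw [phiL_val hh] at this
  exact left_ne_mixed _ v v' this

lemma phiR_ne_A {h : X'.edgeSet} (hh : (h : Sym2 W') ≠ s(u', v')) :
    phiR X X' u v u' v' h ≠ eA X X' u v u' v' := by
  intro hcon
  have := congrArg Subtype.val hcon
  rw [phiR_val hh] at this
  exact right_ne_mixed _ u u' this

lemma phiR_ne_B {h : X'.edgeSet} (hh : (h : Sym2 W') ≠ s(u', v')) :
    phiR X X' u v u' v' h ≠ eB X X' u v u' v' := by
  intro hcon
  have := congrArg Subtype.val hcon
  rw [phiR_val hh] at this
  exact right_ne_mixed _ v v' this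

lemma phiL_ne_phiR {h : X.edgeSet} {h' : X'.edgeSet} (hh : (h : Sym2 W) ≠ s(u, v))
    (hh' : (h' : Sym2 W') ≠ s(u', v')) :
    phiL X X' u v u' v' h ≠ phiR X X' u v u' v' h' := by
  intro hcon
  have := congrArg Subtype.val hcon
  rw [phiL_val hh, phiR_val hh'] at this
  exact left_ne_right _ _ this

lemma phiL_injOn {h₁ h₂ : X.edgeSet} (hh₁ : (h₁ : Sym2 W) ≠ s(u, v))
    (hh₂ : (h₂ : Sym2 W) ≠ s(u, v)) (h : phiL X X' u v u' v' h₁ = phiL X X' u v u' v' h₂) :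
    h₁ = h₂ := by
  have := congrArg Subtype.val h
  rw [phiL_val hh₁, phiL_val hh₂] at this
  exact Subtype.ext (left_inj this)

lemma phiR_injOn {h₁ h₂ : X'.edgeSet} (hh₁ : (h₁ : Sym2 W') ≠ s(u', v'))
    (hh₂ : (h₂ : Sym2 W') ≠ s(u', v')) (h : phiR X X' u v u' v' h₁ = phiR X X' u v u' v' h₂) :
    h₁ = h₂ := by
  have := congrArg Subtype.val h
  rw [phiR_val hh₁, phiR_val hh₂] at this
  exact Subtype.ext (right_inj this)

lemma phiL_adj {h₁ h₂ : X.edgeSet} (hh₁ : (h₁ : Sym2 W) ≠ s(u, v))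
    (hh₂ : (h₂ : Sym2 W) ≠ s(u, v)) (hadj : X.lineGraph.Adj h₁ h₂) :
    (insertSimple X X' u v u' v').lineGraph.Adj (phiL X X' u v u' v' h₁)
      (phiL X X' u v u' v' h₂) := by
  rw [lineGraph_adj_iff_exists] at hadj ⊢
  obtain ⟨hne, w, hw1, hw2⟩ := hadj
  refine ⟨fun hcon => hne (phiL_injOn hh₁ hh₂ hcon), Sum.inl w, ?_, ?_⟩
  · rw [phiL_val hh₁, Sym2.mem_map]; exact ⟨w, hw1, rfl⟩
  · rw [phiL_val hh₂, Sym2.mem_map]; exact ⟨w, hw2, rfl⟩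

lemma phiR_adj {h₁ h₂ : X'.edgeSet} (hh₁ : (h₁ : Sym2 W') ≠ s(u', v'))
    (hh₂ : (h₂ : Sym2 W') ≠ s(u', v')) (hadj : X'.lineGraph.Adj h₁ h₂) :
    (insertSimple X X' u v u' v').lineGraph.Adj (phiR X X' u v u' v' h₁)
      (phiR X X' u v u' v' h₂) := by
  rw [lineGraph_adj_iff_exists] at hadj ⊢
  obtain ⟨hne, w, hw1, hw2⟩ := hadj
  refine ⟨fun hcon => hne (phiR_injOn hh₁ hh₂ hcon), Sum.inr w, ?_, ?_⟩
  · rw [phiR_val hh₁, Sym2.mem_map]; exact ⟨w, hw1, rfl⟩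
  · rw [phiR_val hh₂, Sym2.mem_map]; exact ⟨w, hw2, rfl⟩

lemma Y_cases (F : (insertSimple X X' u v u' v').edgeSet) :
    (∃ h : X.edgeSet, (h : Sym2 W) ≠ s(u, v) ∧ F = phiL X X' u v u' v' h) ∨
    (∃ h' : X'.edgeSet, (h' : Sym2 W') ≠ s(u', v') ∧ F = phiR X X' u v u' v' h') ∨
    F = eA X X' u v u' v' ∨ F = eB X X' u v u' v' := by
  have he := F.2
  rw [mem_Y_iff] at he
  rcases he with ⟨e₀, h1, h2, h3⟩ | ⟨e₀, h1, h2, h3⟩ | h | h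
  · exact Or.inl ⟨⟨e₀, h1⟩, h2, Subtype.ext (h3.trans (phiL_val (h := ⟨e₀, h1⟩) h2).symm)⟩
  · exact Or.inr (Or.inl ⟨⟨e₀, h1⟩, h2, Subtype.ext (h3.trans (phiR_val (h := ⟨e₀, h1⟩) h2).symm)⟩)
  · exact Or.inr (Or.inr (Or.inl (Subtype.ext h)))
  · exact Or.inr (Or.inr (Or.inr (Subtype.ext h)))

end Ins

section Aux2
variable {A : Type*} {G : SimpleGraph A}

lemma aux_mem_support_of_mem_edges {a b : A} {p : G.Walk a b} {e : Sym2 A} {x : A}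
    (he : e ∈ p.edges) (hx : x ∈ e) : x ∈ p.support := by
  induction e using Sym2.ind with
  | _ y z =>
    rcases Sym2.mem_iff.mp hx with h | h
    · subst h; exact p.fst_mem_support_of_mem_edges he
    · subst h; exact p.snd_mem_support_of_mem_edges he

end Aux2

section Splice
variable {W W' : Type*} {X : SimpleGraph W} {X' : SimpleGraph W'} {u v : W} {u' v' : W'}

lemma sym2_phiL_injOn {e₁ e₂ : Sym2 X.edgeSet}
    (h1 : ∀ x ∈ e₁, (x : Sym2 W) ≠ s(u, v)) (h2 : ∀ x ∈ e₂, (x : Sym2 W) ≠ s(u, v))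
    (heq : Sym2.map (phiL X X' u v u' v') e₁ = Sym2.map (phiL X X' u v u' v') e₂) :
    e₁ = e₂ := by
  induction e₁ using Sym2.ind with
  | _ a b =>
    induction e₂ using Sym2.ind with
    | _ a' b' =>
      rw [Sym2.map_pair_eq, Sym2.map_pair_eq, Sym2.eq_iff] at heq
      rw [Sym2.eq_iff]
      rcases heq with ⟨q1, q2⟩ | ⟨q1, q2⟩
      · exact Or.inl ⟨phiL_injOn (h1 a (by simp)) (h2 a' (by simp)) q1,
          phiL_injOn (h1 b (by simp)) (h2 b' (by simp)) q2⟩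
      · exact Or.inr ⟨phiL_injOn (h1 a (by simp)) (h2 b' (by simp)) q1,
          phiL_injOn (h1 b (by simp)) (h2 a' (by simp)) q2⟩

lemma sym2_phiR_injOn {e₁ e₂ : Sym2 X'.edgeSet}
    (h1 : ∀ x ∈ e₁, (x : Sym2 W') ≠ s(u', v')) (h2 : ∀ x ∈ e₂, (x : Sym2 W') ≠ s(u', v'))
    (heq : Sym2.map (phiR X X' u v u' v') e₁ = Sym2.map (phiR X X' u v u' v') e₂) :
    e₁ = e₂ := by
  induction e₁ using Sym2.ind with
  | _ a b =>
    induction e₂ using Sym2.ind with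
    | _ a' b' =>
      rw [Sym2.map_pair_eq, Sym2.map_pair_eq, Sym2.eq_iff] at heq
      rw [Sym2.eq_iff]
      rcases heq with ⟨q1, q2⟩ | ⟨q1, q2⟩
      · exact Or.inl ⟨phiR_injOn (h1 a (by simp)) (h2 a' (by simp)) q1,
          phiR_injOn (h1 b (by simp)) (h2 b' (by simp)) q2⟩
      · exact Or.inr ⟨phiR_injOn (h1 a (by simp)) (h2 b' (by simp)) q1,
          phiR_injOn (h1 b (by simp)) (h2 a' (by simp)) q2⟩

lemma eA_ne_eB (huv : X.Adj u v) : eA X X' u v u' v' ≠ eB X X' u v u' v' := by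
  intro h
  have := congrArg Subtype.val h
  simp only [eA, eB, Sym2.eq_iff] at this
  rcases this with ⟨h1, -⟩ | ⟨h1, -⟩
  · exact huv.ne (Sum.inl_injective h1)
  · exact Sum.inl_ne_inr h1

lemma splice (huv : X.Adj u v) (huv' : X'.Adj u' v')
    {f g : X.edgeSet} {f' g' : X'.edgeSet}
    (hfE : (f : Sym2 W) ≠ s(u, v)) (hgE : (g : Sym2 W) ≠ s(u, v))
    (hf'E : (f' : Sym2 W') ≠ s(u', v')) (hg'E : (g' : Sym2 W') ≠ s(u', v'))
    (hfu : u ∈ (f : Sym2 W)) (hgv : v ∈ (g : Sym2 W))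
    (hf'u' : u' ∈ (f' : Sym2 W')) (hg'v' : v' ∈ (g' : Sym2 W'))
    {p : X.lineGraph.Walk f g} (hp : p.IsPath)
    (hEp : (⟨s(u, v), huv⟩ : X.edgeSet) ∉ p.support)
    (hcov : ∀ x : X.edgeSet, x ≠ ⟨s(u, v), huv⟩ → x ∈ p.support)
    {p' : X'.lineGraph.Walk f' g'} (hp' : p'.IsPath)
    (hEp' : (⟨s(u', v'), huv'⟩ : X'.edgeSet) ∉ p'.support)
    (hcov' : ∀ x : X'.edgeSet, x ≠ ⟨s(u', v'), huv'⟩ → x ∈ p'.support) :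
    ∃ d : (insertSimple X X' u v u' v').lineGraph.Walk (eA X X' u v u' v') (eA X X' u v u' v'),
      d.IsHamiltonianCycle ∧
      d.edges = s(eA X X' u v u' v', phiR X X' u v u' v' f') ::
        ((p'.edges.map (Sym2.map (phiR X X' u v u' v'))) ++
          (s(phiR X X' u v u' v' g', eB X X' u v u' v') ::
           s(eB X X' u v u' v', phiL X X' u v u' v' g) ::
            ((p.edges.map (Sym2.map (phiL X X' u v u' v'))).reverse ++
              [s(phiL X X' u v u' v' f, eA X X' u v u' v')]))) := by
  classical
  set Φ := phiL X X' u v u' v' with hΦ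
  set Ψ := phiR X X' u v u' v' with hΨ
  set A := eA X X' u v u' v' with hA
  set B := eB X X' u v u' v' with hB
  have hmemsup : ∀ x ∈ p.support, (x : Sym2 W) ≠ s(u, v) :=
    fun x hx hcon => hEp ((Subtype.ext hcon : x = ⟨s(u, v), huv⟩) ▸ hx)
  have hmemsup' : ∀ x ∈ p'.support, (x : Sym2 W') ≠ s(u', v') :=
    fun x hx hcon => hEp' ((Subtype.ext hcon : x = ⟨s(u', v'), huv'⟩) ▸ hx)
  obtain ⟨PL, hPLs, hPLe⟩ := aux_mapWalk Φ {x : X.edgeSet | (x : Sym2 W) ≠ s(u, v)}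
    (fun x hx y hy hadj => phiL_adj hx hy hadj) p hmemsup
  obtain ⟨PR, hPRs, hPRe⟩ := aux_mapWalk Ψ {x : X'.edgeSet | (x : Sym2 W') ≠ s(u', v')}
    (fun x hx y hy hadj => phiR_adj hx hy hadj) p' hmemsup'
  have h1 : (insertSimple X X' u v u' v').lineGraph.Adj A (Ψ f') := by
    rw [lineGraph_adj_iff_exists]
    refine ⟨(phiR_ne_A hf'E).symm, Sum.inr u', by simp [hA, eA], ?_⟩
    rw [hΨ, phiR_val hf'E, Sym2.mem_map]
    exact ⟨u', hf'u', rfl⟩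
  have h2 : (insertSimple X X' u v u' v').lineGraph.Adj (Ψ g') B := by
    rw [lineGraph_adj_iff_exists]
    refine ⟨phiR_ne_B hg'E, Sum.inr v', ?_, by simp [hB, eB]⟩
    rw [hΨ, phiR_val hg'E, Sym2.mem_map]
    exact ⟨v', hg'v', rfl⟩
  have h3 : (insertSimple X X' u v u' v').lineGraph.Adj B (Φ g) := by
    rw [lineGraph_adj_iff_exists]
    refine ⟨(phiL_ne_B hgE).symm, Sum.inl v, by simp [hB, eB], ?_⟩
    rw [hΦ, phiL_val hgE, Sym2.mem_map]
    exact ⟨v, hgv, rfl⟩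
  have h4 : (insertSimple X X' u v u' v').lineGraph.Adj (Φ f) A := by
    rw [lineGraph_adj_iff_exists]
    refine ⟨phiL_ne_A hfE, Sum.inl u, ?_, by simp [hA, eA]⟩
    rw [hΦ, phiL_val hfE, Sym2.mem_map]
    exact ⟨u, hfu, rfl⟩
  set d : (insertSimple X X' u v u' v').lineGraph.Walk A A :=
    Walk.cons h1 (PR.append (Walk.cons h2 (Walk.cons h3
      ((PL.reverse).append (Walk.cons h4 Walk.nil))))) with hd
  have hedg : d.edges = s(A, Ψ f') :: ((p'.edges.map (Sym2.map Ψ)) ++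
      (s(Ψ g', B) :: s(B, Φ g) :: ((p.edges.map (Sym2.map Φ)).reverse ++ [s(Φ f, A)]))) := by
    simp [hd, Walk.edges_append, Walk.edges_reverse, hPLe, hPRe]
  have hsupp : d.support =
      A :: (p'.support.map Ψ ++ (B :: ((p.support.map Φ).reverse ++ [A]))) := by
    simp [hd, Walk.support_append, Walk.support_reverse, hPLs, hPRs]
  have hAB : A ≠ B := eA_ne_eB huv
  have hSLnd : (p.support.map Φ).Nodup :=
    List.Nodup.map_on
      (fun x hx y hy hxy => phiL_injOn (hmemsup x hx) (hmemsup y hy) hxy) hp.support_nodup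
  have hSRnd : (p'.support.map Ψ).Nodup :=
    List.Nodup.map_on
      (fun x hx y hy hxy => phiR_injOn (hmemsup' x hx) (hmemsup' y hy) hxy) hp'.support_nodup
  have hAnotSL : A ∉ p.support.map Φ := by
    intro h
    obtain ⟨x, hx, hcon⟩ := List.mem_map.mp h
    exact phiL_ne_A (hmemsup x hx) hcon
  have hBnotSL : B ∉ p.support.map Φ := by
    intro h
    obtain ⟨x, hx, hcon⟩ := List.mem_map.mp h
    exact phiL_ne_B (hmemsup x hx) hcon
  have hAnotSR : A ∉ p'.support.map Ψ := by
    intro h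
    obtain ⟨x, hx, hcon⟩ := List.mem_map.mp h
    exact phiR_ne_A (hmemsup' x hx) hcon
  have hBnotSR : B ∉ p'.support.map Ψ := by
    intro h
    obtain ⟨x, hx, hcon⟩ := List.mem_map.mp h
    exact phiR_ne_B (hmemsup' x hx) hcon
  have hdisjS : List.Disjoint (p'.support.map Ψ) (p.support.map Φ) := by
    intro z hz hz'
    obtain ⟨x, hx, rfl⟩ := List.mem_map.mp hz
    obtain ⟨y, hy, hcon⟩ := List.mem_map.mp hz'
    exact phiL_ne_phiR (hmemsup y hy) (hmemsup' x hx) hcon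
  have htail : d.support.tail.Nodup := by
    rw [hsupp]
    simp only [List.tail_cons]
    rw [List.nodup_append]
    refine ⟨hSRnd, ?_, ?_⟩
    · rw [List.nodup_cons]
      constructor
      · simp only [List.mem_append, List.mem_reverse, List.mem_singleton]
        rintro (h | h)
        · exact hBnotSL h
        · exact hAB h.symm
      · rw [List.nodup_append]
        refine ⟨List.nodup_reverse.mpr hSLnd, List.nodup_singleton _, ?_⟩
        intro z hz w hz' hzw
        subst hzw
        rw [List.mem_reverse] at hz
        rw [List.mem_singleton] at hz'
        exact hAnotSL (hz' ▸ hz)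
    · intro z hz w hz' hzw
      subst hzw
      simp only [List.mem_cons, List.mem_append, List.mem_reverse, List.mem_singleton,
        List.not_mem_nil, or_false] at hz'
      rcases hz' with h | h | h
      · exact hBnotSR (h ▸ hz)
      · exact hdisjS hz h
      · exact hAnotSR (h ▸ hz)
  have hmemtail : ∀ F, F ∈ d.support.tail := by
    intro F
    rw [hsupp]
    simp only [List.tail_cons, List.mem_append, List.mem_cons, List.mem_reverse,
      List.mem_singleton, List.mem_map, List.not_mem_nil, or_false]
    rcases Y_cases F with ⟨h, hh, rfl⟩ | ⟨h', hh', rfl⟩ | rfl | rfl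
    · refine Or.inr (Or.inr (Or.inl ⟨h, hcov h ?_, rfl⟩))
      intro hcon
      exact hh (congrArg Subtype.val hcon)
    · refine Or.inl ⟨h', hcov' h' ?_, rfl⟩
      intro hcon
      exact hh' (congrArg Subtype.val hcon)
    · exact Or.inr (Or.inr (Or.inr hA.symm))
    · exact Or.inr (Or.inl hB.symm)
  -- edge lists
  have hELnd : (p.edges.map (Sym2.map Φ)).Nodup := by
    refine List.Nodup.map_on ?_ hp.isTrail.edges_nodup
    intro e he e2 he2 heq
    exact sym2_phiL_injOn
      (fun x hx => hmemsup x (aux_mem_support_of_mem_edges he hx))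
      (fun x hx => hmemsup x (aux_mem_support_of_mem_edges he2 hx)) heq
  have hERnd : (p'.edges.map (Sym2.map Ψ)).Nodup := by
    refine List.Nodup.map_on ?_ hp'.isTrail.edges_nodup
    intro e he e2 he2 heq
    exact sym2_phiR_injOn
      (fun x hx => hmemsup' x (aux_mem_support_of_mem_edges he hx))
      (fun x hx => hmemsup' x (aux_mem_support_of_mem_edges he2 hx)) heq
  have hmemEL : ∀ e ∈ p.edges.map (Sym2.map Φ), ∀ z ∈ e,
      ∃ x : X.edgeSet, x ∈ p.support ∧ z = Φ x := by
    intro e he z hz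
    obtain ⟨e₀, he₀, rfl⟩ := List.mem_map.mp he
    rw [Sym2.mem_map] at hz
    obtain ⟨x, hx, rfl⟩ := hz
    exact ⟨x, aux_mem_support_of_mem_edges he₀ hx, rfl⟩
  have hmemER : ∀ e ∈ p'.edges.map (Sym2.map Ψ), ∀ z ∈ e,
      ∃ x : X'.edgeSet, x ∈ p'.support ∧ z = Ψ x := by
    intro e he z hz
    obtain ⟨e₀, he₀, rfl⟩ := List.mem_map.mp he
    rw [Sym2.mem_map] at hz
    obtain ⟨x, hx, rfl⟩ := hz
    exact ⟨x, aux_mem_support_of_mem_edges he₀ hx, rfl⟩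
  have hAnotEL : ∀ e ∈ p.edges.map (Sym2.map Φ), A ∉ e ∧ B ∉ e := by
    intro e he
    constructor
    · intro hmem
      obtain ⟨x, hx, hcon⟩ := hmemEL e he A hmem
      exact phiL_ne_A (hmemsup x hx) hcon.symm
    · intro hmem
      obtain ⟨x, hx, hcon⟩ := hmemEL e he B hmem
      exact phiL_ne_B (hmemsup x hx) hcon.symm
  have hAnotER : ∀ e ∈ p'.edges.map (Sym2.map Ψ), A ∉ e ∧ B ∉ e := by
    intro e he
    constructor
    · intro hmem
      obtain ⟨x, hx, hcon⟩ := hmemER e he A hmem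
      exact phiR_ne_A (hmemsup' x hx) hcon.symm
    · intro hmem
      obtain ⟨x, hx, hcon⟩ := hmemER e he B hmem
      exact phiR_ne_B (hmemsup' x hx) hcon.symm
  have hELER : List.Disjoint (p.edges.map (Sym2.map Φ)) (p'.edges.map (Sym2.map Ψ)) := by
    intro e he he'
    have hne : ¬ (e : Sym2 _).IsDiag ∨ True := Or.inr trivial
    obtain ⟨e₀, he₀, rfl⟩ := List.mem_map.mp he
    have : ∃ x : X.edgeSet, x ∈ p.support ∧ Φ x ∈ Sym2.map Φ e₀ := by
      induction e₀ using Sym2.ind with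
      | _ a b =>
        refine ⟨a, aux_mem_support_of_mem_edges he₀ (by simp), ?_⟩
        rw [Sym2.map_pair_eq]; simp
    obtain ⟨x, hx, hmem⟩ := this
    obtain ⟨y, hy, hcon⟩ := hmemER _ he' _ hmem
    exact phiL_ne_phiR (hmemsup x hx) (hmemsup' y hy) hcon
  have hedgnd : d.edges.Nodup := by
    rw [hedg]
    have hT4 : ((p.edges.map (Sym2.map Φ)).reverse ++ [s(Φ f, A)]).Nodup := by
      rw [List.nodup_append]
      refine ⟨List.nodup_reverse.mpr hELnd, List.nodup_singleton _, ?_⟩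
      intro z hz w hz' hzw
      subst hzw
      rw [List.mem_reverse] at hz
      rw [List.mem_singleton] at hz'
      subst hz'
      exact (hAnotEL _ hz).1 (by simp)
    have hT3 : (s(B, Φ g) :: ((p.edges.map (Sym2.map Φ)).reverse ++ [s(Φ f, A)])).Nodup := by
      rw [List.nodup_cons]
      refine ⟨?_, hT4⟩
      intro h
      rcases List.mem_append.mp h with h | h
      · rw [List.mem_reverse] at h
        exact (hAnotEL _ h).2 (by simp)
      · rw [List.mem_singleton] at h
        rcases Sym2.eq_iff.mp h with ⟨q1, -⟩ | ⟨q1, q2⟩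
        · exact phiL_ne_B hfE q1.symm
        · exact hAB q1.symm
    have hT2 : (s(Ψ g', B) :: s(B, Φ g) ::
        ((p.edges.map (Sym2.map Φ)).reverse ++ [s(Φ f, A)])).Nodup := by
      rw [List.nodup_cons]
      refine ⟨?_, hT3⟩
      intro h
      rcases List.mem_cons.mp h with h | h
      · rcases Sym2.eq_iff.mp h with ⟨q1, -⟩ | ⟨q1, q2⟩
        · exact phiR_ne_B hg'E q1
        · exact phiL_ne_phiR hgE hg'E q1.symm
      · rcases List.mem_append.mp h with h | h
        · rw [List.mem_reverse] at h
          exact (hAnotEL _ h).2 (by simp)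
        · rw [List.mem_singleton] at h
          rcases Sym2.eq_iff.mp h with ⟨q1, -⟩ | ⟨q1, q2⟩
          · exact phiL_ne_phiR hfE hg'E q1.symm
          · exact phiR_ne_A hg'E q1
    have hT1 : ((p'.edges.map (Sym2.map Ψ)) ++ (s(Ψ g', B) :: s(B, Φ g) ::
        ((p.edges.map (Sym2.map Φ)).reverse ++ [s(Φ f, A)]))).Nodup := by
      rw [List.nodup_append]
      refine ⟨hERnd, hT2, ?_⟩
      intro z hz w hz' hzw
      subst hzw
      rcases List.mem_cons.mp hz' with h | h
      · subst h
        exact (hAnotER _ hz).2 (by simp)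
      · rcases List.mem_cons.mp h with h | h
        · subst h
          exact (hAnotER _ hz).2 (by simp)
        · rcases List.mem_append.mp h with h | h
          · rw [List.mem_reverse] at h
            exact hELER.symm hz h
          · rw [List.mem_singleton] at h
            subst h
            exact (hAnotER _ hz).1 (by simp)
    rw [List.nodup_cons]
    refine ⟨?_, hT1⟩
    intro h
    rcases List.mem_append.mp h with h | h
    · exact (hAnotER _ h).1 (by simp)
    · rcases List.mem_cons.mp h with h | h
      · rcases Sym2.eq_iff.mp h with ⟨q1, -⟩ | ⟨q1, -⟩
        · exact phiR_ne_A hg'E q1.symm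
        · exact hAB q1
      · rcases List.mem_cons.mp h with h | h
        · rcases Sym2.eq_iff.mp h with ⟨q1, -⟩ | ⟨q1, q2⟩
          · exact hAB q1
          · exact phiL_ne_A hgE q1.symm
        · rcases List.mem_append.mp h with h | h
          · rw [List.mem_reverse] at h
            exact (hAnotEL _ h).1 (by simp)
          · rw [List.mem_singleton] at h
            rcases Sym2.eq_iff.mp h with ⟨q1, q2⟩ | ⟨-, q2⟩
            · exact phiL_ne_A hfE q1.symm
            · exact phiL_ne_phiR hfE hf'E q2.symm
  have hnotnil : ¬ d.Nil := by rw [hd]; exact Walk.not_nil_cons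
  refine ⟨d, ?_, hedg⟩
  rw [Walk.isHamiltonianCycle_iff_isCycle_and_support_count_tail_eq_one]
  constructor
  · rw [Walk.isCycle_def]
    refine ⟨⟨hedgnd⟩, ?_, htail⟩
    intro hcon
    rw [hcon] at hnotnil
    exact hnotnil Walk.nil_nil
  · intro F
    convert List.count_eq_one_of_mem htail (hmemtail F)

/-- **Lemma A.** Let `X, X'` be vertex-disjoint `k`-regular simple graphs, `uv`
an edge of `X`, `u'v'` an edge of `X'`, and `Y` the insertion of `X' - u'v'` into `uv`.  If
`L(X)` has a Hamilton decomposition `H` that is Euler tour compatible at `uv` and `L(X')` has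
a Hamilton decomposition `H'` that is Euler tour compatible at `u'v'`, then `L(Y)` has a
Hamilton decomposition `H*` such that whenever `H` is Euler tour compatible at a vertex
`xy ≠ uv` of `L(X)`, `H*` is Euler tour compatible at `xy`. -/
theorem lemmaA (k : ℕ) (X : SimpleGraph W) (X' : SimpleGraph W')
    (u v : W) (u' v' : W') (huv : X.Adj u v) (huv' : X'.Adj u' v')
    (hX : RegularDeg X k) (hX' : RegularDeg X' k)
    (n : ℕ) (hn : n = k - 1)
    (x : Fin n → X.edgeSet) (c : ∀ i, X.lineGraph.Walk (x i) (x i))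
    (hc : IsHamDecompFam X.lineGraph x c)
    (hcompat : ∀ (i : Fin n) (E : X.edgeSet), (E : Sym2 W) = s(u, v) → CompatAt (c i) E u v)
    (x' : Fin n → X'.edgeSet) (c' : ∀ i, X'.lineGraph.Walk (x' i) (x' i))
    (hc' : IsHamDecompFam X'.lineGraph x' c')
    (hcompat' : ∀ (i : Fin n) (E' : X'.edgeSet),
      (E' : Sym2 W') = s(u', v') → CompatAt (c' i) E' u' v') :
    ∃ (y : Fin n → (insertSimple X X' u v u' v').edgeSet)
      (d : ∀ i, (insertSimple X X' u v u' v').lineGraph.Walk (y i) (y i)),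
      IsHamDecompFam (insertSimple X X' u v u' v').lineGraph y d ∧
        ∀ a b : W, X.Adj a b → s(a, b) ≠ s(u, v) →
          (∀ (i : Fin n) (E : X.edgeSet), (E : Sym2 W) = s(a, b) → CompatAt (c i) E a b) →
          ∀ (i : Fin n) (F : (insertSimple X X' u v u' v').edgeSet),
            (F : Sym2 (W ⊕ W')) = s(Sum.inl a, Sum.inl b) →
            CompatAt (d i) F (Sum.inl a) (Sum.inl b) := by
  classical
  set E : X.edgeSet := ⟨s(u, v), huv⟩ with hE
  set E' : X'.edgeSet := ⟨s(u', v'), huv'⟩ with hE'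
  have hEval : (E : Sym2 W) = s(u, v) := rfl
  have H : ∀ i : Fin n, ∃ (f g : X.edgeSet) (p : X.lineGraph.Walk f g),
      f ≠ g ∧ ((f : Sym2 W) ≠ s(u, v)) ∧ ((g : Sym2 W) ≠ s(u, v)) ∧
      u ∈ (f : Sym2 W) ∧ v ∈ (g : Sym2 W) ∧
      p.IsPath ∧ E ∉ p.support ∧ (∀ z, z ≠ E → z ∈ p.support) ∧
      (∀ e, e ∈ (c i).edges ↔ e = s(E, f) ∨ e ∈ p.edges ∨ e = s(E, g)) := by
    intro i
    obtain ⟨f, g, hfg, hset, hfu, hgv⟩ := hcompat i E rfl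
    obtain ⟨p, hp, hEp, hcov, hiff⟩ := aux_orient (hc.1 i) hfg hset
    have hadjf : X.lineGraph.Adj E f :=
      Walk.adj_of_mem_edges (c i) ((hiff _).mpr (Or.inl rfl))
    have hadjg : X.lineGraph.Adj E g :=
      Walk.adj_of_mem_edges (c i) ((hiff _).mpr (Or.inr (Or.inr rfl)))
    refine ⟨f, g, p, hfg, ?_, ?_, hfu, hgv, hp, hEp, hcov, hiff⟩
    · intro hcon; exact hadjf.ne ((Subtype.ext hcon : _ = E)).symm
    · intro hcon; exact hadjg.ne ((Subtype.ext hcon : _ = E)).symm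
  choose f g pw hfg hfE hgE hfu hgv hp hEp hcov hiff using H
  have H' : ∀ i : Fin n, ∃ (f' g' : X'.edgeSet) (p' : X'.lineGraph.Walk f' g'),
      f' ≠ g' ∧ ((f' : Sym2 W') ≠ s(u', v')) ∧ ((g' : Sym2 W') ≠ s(u', v')) ∧
      u' ∈ (f' : Sym2 W') ∧ v' ∈ (g' : Sym2 W') ∧
      p'.IsPath ∧ E' ∉ p'.support ∧ (∀ z, z ≠ E' → z ∈ p'.support) ∧
      (∀ e, e ∈ (c' i).edges ↔ e = s(E', f') ∨ e ∈ p'.edges ∨ e = s(E', g')) := by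
    intro i
    obtain ⟨f', g', hfg', hset', hfu', hgv'⟩ := hcompat' i E' rfl
    obtain ⟨p', hp', hEp', hcov', hiff'⟩ := aux_orient (hc'.1 i) hfg' hset'
    have hadjf : X'.lineGraph.Adj E' f' :=
      Walk.adj_of_mem_edges (c' i) ((hiff' _).mpr (Or.inl rfl))
    have hadjg : X'.lineGraph.Adj E' g' :=
      Walk.adj_of_mem_edges (c' i) ((hiff' _).mpr (Or.inr (Or.inr rfl)))
    refine ⟨f', g', p', hfg', ?_, ?_, hfu', hgv', hp', hEp', hcov', hiff'⟩
    · intro hcon; exact hadjf.ne ((Subtype.ext hcon : _ = E')).symm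
    · intro hcon; exact hadjg.ne ((Subtype.ext hcon : _ = E')).symm
  choose f' g' pw' hfg' hf'E hg'E hf'u' hg'v' hp' hEp' hcov' hiff' using H'
  have HS : ∀ i : Fin n,
      ∃ d : (insertSimple X X' u v u' v').lineGraph.Walk (eA X X' u v u' v')
        (eA X X' u v u' v'),
      d.IsHamiltonianCycle ∧
      d.edges = s(eA X X' u v u' v', phiR X X' u v u' v' (f' i)) ::
        (((pw' i).edges.map (Sym2.map (phiR X X' u v u' v'))) ++
          (s(phiR X X' u v u' v' (g' i), eB X X' u v u' v') ::
           s(eB X X' u v u' v', phiL X X' u v u' v' (g i)) ::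
            (((pw i).edges.map (Sym2.map (phiL X X' u v u' v'))).reverse ++
              [s(phiL X X' u v u' v' (f i), eA X X' u v u' v')]))) := by
    intro i
    exact splice huv huv' (hfE i) (hgE i) (hf'E i) (hg'E i) (hfu i) (hgv i)
      (hf'u' i) (hg'v' i) (hp i) (hEp i) (hcov i) (hp' i) (hEp' i) (hcov' i)
  choose d hdham hdedg using HS
  have hmemsupT : ∀ i, ∀ z ∈ (pw i).support, (z : Sym2 W) ≠ s(u, v) :=
    fun i z hz hcon => hEp i ((Subtype.ext hcon : z = E) ▸ hz)
  have hmemsupT' : ∀ i, ∀ z ∈ (pw' i).support, (z : Sym2 W') ≠ s(u', v') :=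
    fun i z hz hcon => hEp' i ((Subtype.ext hcon : z = E') ▸ hz)
  have hpwc : ∀ i, ∀ e ∈ (pw i).edges, e ∈ (c i).edges :=
    fun i e he => (hiff i e).mpr (Or.inr (Or.inl he))
  have hpwc' : ∀ i, ∀ e ∈ (pw' i).edges, e ∈ (c' i).edges :=
    fun i e he => (hiff' i e).mpr (Or.inr (Or.inl he))
  have hEf : ∀ i, s(E, f i) ∈ (c i).edges := fun i => (hiff i _).mpr (Or.inl rfl)
  have hEg : ∀ i, s(E, g i) ∈ (c i).edges := fun i => (hiff i _).mpr (Or.inr (Or.inr rfl))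
  have hEf' : ∀ i, s(E', f' i) ∈ (c' i).edges := fun i => (hiff' i _).mpr (Or.inl rfl)
  have hEg' : ∀ i, s(E', g' i) ∈ (c' i).edges := fun i => (hiff' i _).mpr (Or.inr (Or.inr rfl))
  have hAB : (eA X X' u v u' v') ≠ (eB X X' u v u' v') := eA_ne_eB huv
  have hmemEL : ∀ i, ∀ e ∈ (pw i).edges.map (Sym2.map (phiL X X' u v u' v')), ∀ z ∈ e,
      ∃ xx : X.edgeSet, xx ∈ (pw i).support ∧ z = (phiL X X' u v u' v') xx := by
    intro i e he z hz
    obtain ⟨e₀, he₀, rfl⟩ := List.mem_map.mp he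
    rw [Sym2.mem_map] at hz
    obtain ⟨xx, hx, rfl⟩ := hz
    exact ⟨xx, aux_mem_support_of_mem_edges he₀ hx, rfl⟩
  have hmemER : ∀ i, ∀ e ∈ (pw' i).edges.map (Sym2.map (phiR X X' u v u' v')), ∀ z ∈ e,
      ∃ xx : X'.edgeSet, xx ∈ (pw' i).support ∧ z = (phiR X X' u v u' v') xx := by
    intro i e he z hz
    obtain ⟨e₀, he₀, rfl⟩ := List.mem_map.mp he
    rw [Sym2.mem_map] at hz
    obtain ⟨xx, hx, rfl⟩ := hz
    exact ⟨xx, aux_mem_support_of_mem_edges he₀ hx, rfl⟩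
  have hABnotEL : ∀ i, ∀ e ∈ (pw i).edges.map (Sym2.map (phiL X X' u v u' v')),
      (eA X X' u v u' v') ∉ e ∧ (eB X X' u v u' v') ∉ e := by
    intro i e he
    constructor
    · intro hmem2
      obtain ⟨xx, hx, hcon⟩ := hmemEL i e he _ hmem2
      exact phiL_ne_A (hmemsupT i xx hx) hcon.symm
    · intro hmem2
      obtain ⟨xx, hx, hcon⟩ := hmemEL i e he _ hmem2
      exact phiL_ne_B (hmemsupT i xx hx) hcon.symm
  have hABnotER : ∀ i, ∀ e ∈ (pw' i).edges.map (Sym2.map (phiR X X' u v u' v')),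
      (eA X X' u v u' v') ∉ e ∧ (eB X X' u v u' v') ∉ e := by
    intro i e he
    constructor
    · intro hmem2
      obtain ⟨xx, hx, hcon⟩ := hmemER i e he _ hmem2
      exact phiR_ne_A (hmemsupT' i xx hx) hcon.symm
    · intro hmem2
      obtain ⟨xx, hx, hcon⟩ := hmemER i e he _ hmem2
      exact phiR_ne_B (hmemsupT' i xx hx) hcon.symm
  have hmem : ∀ i e, e ∈ (d i).edges ↔
      ((e = s((eA X X' u v u' v'), (phiR X X' u v u' v') (f' i)) ∨ e = s((phiR X X' u v u' v') (g' i), (eB X X' u v u' v')) ∨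
        e = s((eB X X' u v u' v'), (phiL X X' u v u' v') (g i)) ∨ e = s((phiL X X' u v u' v') (f i), (eA X X' u v u' v'))) ∨
      e ∈ (pw' i).edges.map (Sym2.map (phiR X X' u v u' v')) ∨
      e ∈ (pw i).edges.map (Sym2.map (phiL X X' u v u' v'))) := by
    intro i e
    rw [hdedg i]
    simp only [List.mem_cons, List.mem_append, List.mem_reverse, List.mem_singleton,
      List.not_mem_nil, or_false]
    tauto
  refine ⟨fun _ => eA X X' u v u' v', d, ⟨fun i => by convert hdham i, ?_⟩, ?_⟩
  · intro i j hij e hei hej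
    rw [hmem i] at hei
    rw [hmem j] at hej
    have hdisjC := hc.2 i j hij
    have hdisjC' := hc'.2 i j hij
    rcases hei with (h1 | h1 | h1 | h1) | h1 | h1
    · -- e = L1 i
      rcases hej with (h2 | h2 | h2 | h2) | h2 | h2
      · rcases Sym2.eq_iff.mp (h1.symm.trans h2) with ⟨-, q2⟩ | ⟨q1, -⟩
        · have hq : f' i = f' j := phiR_injOn (hf'E i) (hf'E j) q2
          exact hdisjC' _ (hEf' i) (by rw [hq]; exact hEf' j)
        · exact phiR_ne_A (hf'E j) q1.symm
      · rcases Sym2.eq_iff.mp (h1.symm.trans h2) with ⟨q1, -⟩ | ⟨q1, -⟩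
        · exact phiR_ne_A (hg'E j) q1.symm
        · exact hAB q1
      · rcases Sym2.eq_iff.mp (h1.symm.trans h2) with ⟨q1, -⟩ | ⟨q1, -⟩
        · exact hAB q1
        · exact phiL_ne_A (hgE j) q1.symm
      · rcases Sym2.eq_iff.mp (h1.symm.trans h2) with ⟨q1, -⟩ | ⟨-, q2⟩
        · exact phiL_ne_A (hfE j) q1.symm
        · exact phiL_ne_phiR (hfE j) (hf'E i) q2.symm
      · exact (hABnotER j _ h2).1 (by rw [h1] at h2 ⊢; simp)
      · exact (hABnotEL j _ h2).1 (by rw [h1] at h2 ⊢; simp)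
    · -- e = L2 i
      rcases hej with (h2 | h2 | h2 | h2) | h2 | h2
      · rcases Sym2.eq_iff.mp (h1.symm.trans h2) with ⟨q1, -⟩ | ⟨-, q2⟩
        · exact phiR_ne_A (hg'E i) q1
        · exact hAB q2.symm
      · rcases Sym2.eq_iff.mp (h1.symm.trans h2) with ⟨q1, -⟩ | ⟨q1, -⟩
        · have hq : g' i = g' j := phiR_injOn (hg'E i) (hg'E j) q1
          exact hdisjC' _ (hEg' i) (by rw [hq]; exact hEg' j)
        · exact phiR_ne_B (hg'E i) q1
      · rcases Sym2.eq_iff.mp (h1.symm.trans h2) with ⟨q1, -⟩ | ⟨q1, -⟩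
        · exact phiR_ne_B (hg'E i) q1
        · exact phiL_ne_phiR (hgE j) (hg'E i) q1.symm
      · rcases Sym2.eq_iff.mp (h1.symm.trans h2) with ⟨q1, -⟩ | ⟨q1, -⟩
        · exact phiL_ne_phiR (hfE j) (hg'E i) q1.symm
        · exact phiR_ne_A (hg'E i) q1
      · exact (hABnotER j _ h2).2 (by rw [h1] at h2 ⊢; simp)
      · exact (hABnotEL j _ h2).2 (by rw [h1] at h2 ⊢; simp)
    · -- e = L3 i
      rcases hej with (h2 | h2 | h2 | h2) | h2 | h2
      · rcases Sym2.eq_iff.mp (h1.symm.trans h2) with ⟨q1, -⟩ | ⟨q1, -⟩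
        · exact hAB q1.symm
        · exact phiR_ne_B (hf'E j) q1.symm
      · rcases Sym2.eq_iff.mp (h1.symm.trans h2) with ⟨-, q2⟩ | ⟨-, q2⟩
        · exact phiL_ne_B (hgE i) q2
        · exact phiL_ne_phiR (hgE i) (hg'E j) q2
      · rcases Sym2.eq_iff.mp (h1.symm.trans h2) with ⟨-, q2⟩ | ⟨q1, -⟩
        · have hq : g i = g j := phiL_injOn (hgE i) (hgE j) q2
          exact hdisjC _ (hEg i) (by rw [hq]; exact hEg j)
        · exact phiL_ne_B (hgE j) q1.symm
      · rcases Sym2.eq_iff.mp (h1.symm.trans h2) with ⟨q1, -⟩ | ⟨q1, -⟩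
        · exact phiL_ne_B (hfE j) q1.symm
        · exact hAB q1.symm
      · exact (hABnotER j _ h2).2 (by rw [h1] at h2 ⊢; simp)
      · exact (hABnotEL j _ h2).2 (by rw [h1] at h2 ⊢; simp)
    · -- e = L4 i
      rcases hej with (h2 | h2 | h2 | h2) | h2 | h2
      · rcases Sym2.eq_iff.mp (h1.symm.trans h2) with ⟨q1, -⟩ | ⟨q1, -⟩
        · exact phiL_ne_A (hfE i) q1
        · exact phiL_ne_phiR (hfE i) (hf'E j) q1
      · rcases Sym2.eq_iff.mp (h1.symm.trans h2) with ⟨q1, -⟩ | ⟨q1, -⟩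
        · exact phiL_ne_phiR (hfE i) (hg'E j) q1
        · exact phiL_ne_B (hfE i) q1
      · rcases Sym2.eq_iff.mp (h1.symm.trans h2) with ⟨q1, -⟩ | ⟨-, q2⟩
        · exact phiL_ne_B (hfE i) q1
        · exact hAB q2
      · rcases Sym2.eq_iff.mp (h1.symm.trans h2) with ⟨q1, -⟩ | ⟨q1, -⟩
        · have hq : f i = f j := phiL_injOn (hfE i) (hfE j) q1
          exact hdisjC _ (hEf i) (by rw [hq]; exact hEf j)
        · exact phiL_ne_A (hfE i) q1
      · exact (hABnotER j _ h2).1 (by rw [h1] at h2 ⊢; simp)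
      · exact (hABnotEL j _ h2).1 (by rw [h1] at h2 ⊢; simp)
    · -- e ∈ ER i
      rcases hej with (h2 | h2 | h2 | h2) | h2 | h2
      · exact (hABnotER i _ h1).1 (by rw [h2]; simp)
      · exact (hABnotER i _ h1).2 (by rw [h2]; simp)
      · exact (hABnotER i _ h1).2 (by rw [h2]; simp)
      · exact (hABnotER i _ h1).1 (by rw [h2]; simp)
      · obtain ⟨e₀, he₀, rfl⟩ := List.mem_map.mp h1
        obtain ⟨e₁, he₁, heq⟩ := List.mem_map.mp h2
        have hq : e₁ = e₀ := sym2_phiR_injOn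
          (fun z hz => hmemsupT' j z (aux_mem_support_of_mem_edges he₁ hz))
          (fun z hz => hmemsupT' i z (aux_mem_support_of_mem_edges he₀ hz)) heq
        exact hdisjC' _ (hpwc' i _ he₀) (hpwc' j _ (hq ▸ he₁))
      · obtain ⟨e₀, he₀, rfl⟩ := List.mem_map.mp h1
        have hz0 : e₀.out.1 ∈ e₀ := Sym2.out_fst_mem e₀
        have hmm : (phiR X X' u v u' v') e₀.out.1 ∈ Sym2.map (phiR X X' u v u' v') e₀ :=
          Sym2.mem_map.mpr ⟨_, hz0, rfl⟩
        obtain ⟨yy, hy, hcon⟩ := hmemEL j _ h2 _ hmm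
        exact phiL_ne_phiR (hmemsupT j yy hy)
          (hmemsupT' i _ (aux_mem_support_of_mem_edges he₀ hz0)) hcon.symm
    · -- e ∈ EL i
      rcases hej with (h2 | h2 | h2 | h2) | h2 | h2
      · exact (hABnotEL i _ h1).1 (by rw [h2]; simp)
      · exact (hABnotEL i _ h1).2 (by rw [h2]; simp)
      · exact (hABnotEL i _ h1).2 (by rw [h2]; simp)
      · exact (hABnotEL i _ h1).1 (by rw [h2]; simp)
      · obtain ⟨e₀, he₀, rfl⟩ := List.mem_map.mp h1
        have hz0 : e₀.out.1 ∈ e₀ := Sym2.out_fst_mem e₀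
        have hmm : (phiL X X' u v u' v') e₀.out.1 ∈ Sym2.map (phiL X X' u v u' v') e₀ :=
          Sym2.mem_map.mpr ⟨_, hz0, rfl⟩
        obtain ⟨yy, hy, hcon⟩ := hmemER j _ h2 _ hmm
        exact phiL_ne_phiR (hmemsupT i _ (aux_mem_support_of_mem_edges he₀ hz0))
          (hmemsupT' j yy hy) hcon
      · obtain ⟨e₀, he₀, rfl⟩ := List.mem_map.mp h1
        obtain ⟨e₁, he₁, heq⟩ := List.mem_map.mp h2
        have hq : e₁ = e₀ := sym2_phiL_injOn
          (fun z hz => hmemsupT j z (aux_mem_support_of_mem_edges he₁ hz))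
          (fun z hz => hmemsupT i z (aux_mem_support_of_mem_edges he₀ hz)) heq
        exact hdisjC _ (hpwc i _ he₀) (hpwc j _ (hq ▸ he₁))
  · intro a b hab hne hco i F hF
    have hDval : ((⟨s(a, b), hab⟩ : X.edgeSet) : Sym2 W) ≠ s(u, v) := hne
    set D : X.edgeSet := ⟨s(a, b), hab⟩ with hDdef
    have hDval2 : (D : Sym2 W) = s(a, b) := rfl
    have hFD : F = (phiL X X' u v u' v') D := by
      apply Subtype.ext
      rw [hF, phiL_val hDval, hDval2]
      exact (Sym2.map_pair_eq Sum.inl a b).symm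
    subst hFD
    obtain ⟨f₁, g₁, hf₁g₁, hset₁, ha₁, hb₁⟩ := hco i D rfl
    have hset₁' : ∀ yv : X.edgeSet, s(D, yv) ∈ (c i).edges ↔ (yv = f₁ ∨ yv = g₁) := by
      intro yv
      have h0 := Set.ext_iff.mp hset₁ yv
      simpa using h0
    have hDE : D ≠ E := fun hcon => hne (congrArg Subtype.val hcon)
    have hchar : ∀ yv : X.edgeSet, s(D, yv) ∈ (c i).edges ↔
        (s(D, yv) ∈ (pw i).edges ∨ (D = f i ∧ yv = E) ∨ (D = g i ∧ yv = E)) := by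
      intro yv
      rw [hiff i]
      constructor
      · rintro (h | h | h)
        · rcases Sym2.eq_iff.mp h with ⟨q1, q2⟩ | ⟨q1, q2⟩
          · exact absurd q1 hDE
          · exact Or.inr (Or.inl ⟨q1, q2⟩)
        · exact Or.inl h
        · rcases Sym2.eq_iff.mp h with ⟨q1, q2⟩ | ⟨q1, q2⟩
          · exact absurd q1 hDE
          · exact Or.inr (Or.inr ⟨q1, q2⟩)
      · rintro (h | ⟨q1, q2⟩ | ⟨q1, q2⟩)
        · exact Or.inr (Or.inl h)
        · exact Or.inl (by rw [q1, q2]; exact Sym2.eq_swap)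
        · exact Or.inr (Or.inr (by rw [q1, q2]; exact Sym2.eq_swap))
    have hdchar : ∀ Hv, s(((phiL X X' u v u' v') D), Hv) ∈ (d i).edges ↔
        ((∃ yv : X.edgeSet, s(D, yv) ∈ (pw i).edges ∧ Hv = (phiL X X' u v u' v') yv) ∨
         (D = g i ∧ Hv = (eB X X' u v u' v')) ∨ (D = f i ∧ Hv = (eA X X' u v u' v'))) := by
      intro Hv
      rw [hmem i]
      constructor
      · rintro ((h | h | h | h) | h | h)
        · rcases Sym2.eq_iff.mp h with ⟨q1, -⟩ | ⟨q1, -⟩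
          · exact absurd q1 (phiL_ne_A hDval)
          · exact absurd q1 (phiL_ne_phiR hDval (hf'E i))
        · rcases Sym2.eq_iff.mp h with ⟨q1, -⟩ | ⟨q1, -⟩
          · exact absurd q1 (phiL_ne_phiR hDval (hg'E i))
          · exact absurd q1 (phiL_ne_B hDval)
        · rcases Sym2.eq_iff.mp h with ⟨q1, -⟩ | ⟨q1, q2⟩
          · exact absurd q1 (phiL_ne_B hDval)
          · exact Or.inr (Or.inl ⟨phiL_injOn hDval (hgE i) q1, q2⟩)
        · rcases Sym2.eq_iff.mp h with ⟨q1, q2⟩ | ⟨q1, -⟩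
          · exact Or.inr (Or.inr ⟨phiL_injOn hDval (hfE i) q1, q2⟩)
          · exact absurd q1 (phiL_ne_A hDval)
        · exfalso
          obtain ⟨z, hz, hcon⟩ := hmemER i _ h ((phiL X X' u v u' v') D) (by simp)
          exact phiL_ne_phiR hDval (hmemsupT' i z hz) hcon
        · obtain ⟨e₀, he₀, heq⟩ := List.mem_map.mp h
          revert he₀ heq
          induction e₀ using Sym2.ind with
          | _ z1 z2 =>
            intro he₀ heq
            rw [Sym2.map_pair_eq] at heq
            rcases Sym2.eq_iff.mp heq with ⟨q1, q2⟩ | ⟨q1, q2⟩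
            · have hz1 : z1 ∈ (pw i).support := aux_mem_support_of_mem_edges he₀ (by simp)
              have hzD : z1 = D := phiL_injOn (hmemsupT i z1 hz1) hDval q1
              exact Or.inl ⟨z2, by rw [← hzD]; exact he₀, q2.symm⟩
            · have hz2 : z2 ∈ (pw i).support := aux_mem_support_of_mem_edges he₀ (by simp)
              have hzD : z2 = D := phiL_injOn (hmemsupT i z2 hz2) hDval q2
              refine Or.inl ⟨z1, ?_, q1.symm⟩
              rw [← hzD, Sym2.eq_swap]
              exact he₀
      · rintro (⟨yv, hyv, rfl⟩ | ⟨q1, q2⟩ | ⟨q1, q2⟩)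
        · exact Or.inr (Or.inr (List.mem_map.mpr ⟨s(D, yv), hyv, Sym2.map_pair_eq _ _ _⟩))
        · refine Or.inl (Or.inr (Or.inr (Or.inl ?_)))
          rw [q1, q2]
          exact Sym2.eq_swap
        · refine Or.inl (Or.inr (Or.inr (Or.inr ?_)))
          rw [q1, q2]
    have hnotEpw : ∀ yv, s(D, yv) ∈ (pw i).edges → yv ≠ E := by
      intro yv hyv hcon
      exact hEp i (hcon ▸ aux_mem_support_of_mem_edges hyv (by simp))
    have hne_val : ∀ {z : X.edgeSet}, z ≠ E → (z : Sym2 W) ≠ s(u, v) :=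
      fun hz hval => hz (Subtype.ext hval)
    unfold CompatAt
    by_cases hDfi : D = f i
    · have hDgi : D ≠ g i := fun hcon => hfg i (hDfi.symm.trans hcon)
      have hsE : E = f₁ ∨ E = g₁ :=
        (hset₁' E).mp ((hchar E).mpr (Or.inr (Or.inl ⟨hDfi, rfl⟩)))
      have hNp : ∀ yv, s(D, yv) ∈ (pw i).edges ↔ ((yv = f₁ ∨ yv = g₁) ∧ yv ≠ E) := by
        intro yv
        constructor
        · intro hyv
          exact ⟨(hset₁' yv).mp ((hchar yv).mpr (Or.inl hyv)), hnotEpw yv hyv⟩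
        · rintro ⟨hin, hneE⟩
          rcases (hchar yv).mp ((hset₁' yv).mpr hin) with h | ⟨-, q2⟩ | ⟨q1, -⟩
          · exact h
          · exact absurd q2 hneE
          · exact absurd q1 hDgi
      rcases hsE with hsE | hsE
      · have hg₁E : g₁ ≠ E := fun hcon => hf₁g₁ (hsE.symm.trans hcon.symm)
        have ha2 : a = u := by
          have ha₁' : a = u ∨ a = v := by
            have hh : a ∈ (E : Sym2 W) := by rw [hsE]; exact ha₁
            rw [hEval] at hh
            exact Sym2.mem_iff.mp hh
          have hu : u = a ∨ u = b := by
            have hh : u ∈ (D : Sym2 W) := by rw [hDfi]; exact hfu i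
            rw [hDval2] at hh
            exact Sym2.mem_iff.mp hh
          rcases ha₁' with h | h
          · exact h
          · rcases hu with q | q
            · exact q.symm
            · exfalso
              apply hne
              rw [h, ← q]
              exact Sym2.eq_swap
        refine ⟨(eA X X' u v u' v'), (phiL X X' u v u' v') g₁, (phiL_ne_A (hne_val hg₁E)).symm, ?_, ?_, ?_⟩
        · ext Hv
          simp only [Set.mem_setOf_eq, Set.mem_insert_iff, Set.mem_singleton_iff]
          rw [hdchar Hv]
          constructor
          · rintro (⟨yv, hyv, rfl⟩ | ⟨q1, -⟩ | ⟨-, q2⟩)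
            · have hq := (hNp yv).mp hyv
              rcases hq.1 with h | h
              · exact absurd (h.trans hsE.symm) hq.2
              · exact Or.inr (by rw [h])
            · exact absurd q1 hDgi
            · exact Or.inl q2
          · rintro (rfl | rfl)
            · exact Or.inr (Or.inr ⟨hDfi, rfl⟩)
            · exact Or.inl ⟨g₁, (hNp g₁).mpr ⟨Or.inr rfl, hg₁E⟩, rfl⟩
        · rw [ha2]
          simp [eA]
        · rw [phiL_val (hne_val hg₁E), Sym2.mem_map]
          exact ⟨b, hb₁, rfl⟩
      · have hf₁E : f₁ ≠ E := fun hcon => hf₁g₁ (hcon.trans hsE)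
        have hb2 : b = u := by
          have hb₁' : b = u ∨ b = v := by
            have hh : b ∈ (E : Sym2 W) := by rw [hsE]; exact hb₁
            rw [hEval] at hh
            exact Sym2.mem_iff.mp hh
          have hu : u = a ∨ u = b := by
            have hh : u ∈ (D : Sym2 W) := by rw [hDfi]; exact hfu i
            rw [hDval2] at hh
            exact Sym2.mem_iff.mp hh
          rcases hb₁' with h | h
          · exact h
          · rcases hu with q | q
            · exfalso
              apply hne
              rw [← q, h]
            · exact q.symm
        refine ⟨(phiL X X' u v u' v') f₁, (eA X X' u v u' v'), phiL_ne_A (hne_val hf₁E), ?_, ?_, ?_⟩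
        · ext Hv
          simp only [Set.mem_setOf_eq, Set.mem_insert_iff, Set.mem_singleton_iff]
          rw [hdchar Hv]
          constructor
          · rintro (⟨yv, hyv, rfl⟩ | ⟨q1, -⟩ | ⟨-, q2⟩)
            · have hq := (hNp yv).mp hyv
              rcases hq.1 with h | h
              · exact Or.inl (by rw [h])
              · exact absurd (h.trans hsE.symm) hq.2
            · exact absurd q1 hDgi
            · exact Or.inr q2
          · rintro (rfl | rfl)
            · exact Or.inl ⟨f₁, (hNp f₁).mpr ⟨Or.inl rfl, hf₁E⟩, rfl⟩
            · exact Or.inr (Or.inr ⟨hDfi, rfl⟩)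
        · rw [phiL_val (hne_val hf₁E), Sym2.mem_map]
          exact ⟨a, ha₁, rfl⟩
        · rw [hb2]
          simp [eA]
    · by_cases hDgi : D = g i
      · have hsE : E = f₁ ∨ E = g₁ :=
          (hset₁' E).mp ((hchar E).mpr (Or.inr (Or.inr ⟨hDgi, rfl⟩)))
        have hNp : ∀ yv, s(D, yv) ∈ (pw i).edges ↔ ((yv = f₁ ∨ yv = g₁) ∧ yv ≠ E) := by
          intro yv
          constructor
          · intro hyv
            exact ⟨(hset₁' yv).mp ((hchar yv).mpr (Or.inl hyv)), hnotEpw yv hyv⟩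
          · rintro ⟨hin, hneE⟩
            rcases (hchar yv).mp ((hset₁' yv).mpr hin) with h | ⟨q1, -⟩ | ⟨-, q2⟩
            · exact h
            · exact absurd q1 hDfi
            · exact absurd q2 hneE
        rcases hsE with hsE | hsE
        · have hg₁E : g₁ ≠ E := fun hcon => hf₁g₁ (hsE.symm.trans hcon.symm)
          have ha2 : a = v := by
            have ha₁' : a = u ∨ a = v := by
              have hh : a ∈ (E : Sym2 W) := by rw [hsE]; exact ha₁
              rw [hEval] at hh
              exact Sym2.mem_iff.mp hh
            have hv : v = a ∨ v = b := by
              have hh : v ∈ (D : Sym2 W) := by rw [hDgi]; exact hgv i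
              rw [hDval2] at hh
              exact Sym2.mem_iff.mp hh
            rcases ha₁' with h | h
            · exfalso
              rcases hv with q | q
              · exact huv.ne (h.symm.trans q.symm)
              · exact hne (by rw [h, ← q])
            · exact h
          refine ⟨(eB X X' u v u' v'), (phiL X X' u v u' v') g₁, (phiL_ne_B (hne_val hg₁E)).symm, ?_, ?_, ?_⟩
          · ext Hv
            simp only [Set.mem_setOf_eq, Set.mem_insert_iff, Set.mem_singleton_iff]
            rw [hdchar Hv]
            constructor
            · rintro (⟨yv, hyv, rfl⟩ | ⟨-, q2⟩ | ⟨q1, -⟩)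
              · have hq := (hNp yv).mp hyv
                rcases hq.1 with h | h
                · exact absurd (h.trans hsE.symm) hq.2
                · exact Or.inr (by rw [h])
              · exact Or.inl q2
              · exact absurd q1 hDfi
            · rintro (rfl | rfl)
              · exact Or.inr (Or.inl ⟨hDgi, rfl⟩)
              · exact Or.inl ⟨g₁, (hNp g₁).mpr ⟨Or.inr rfl, hg₁E⟩, rfl⟩
          · rw [ha2]
            simp [eB]
          · rw [phiL_val (hne_val hg₁E), Sym2.mem_map]
            exact ⟨b, hb₁, rfl⟩
        · have hf₁E : f₁ ≠ E := fun hcon => hf₁g₁ (hcon.trans hsE)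
          have hb2 : b = v := by
            have hb₁' : b = u ∨ b = v := by
              have hh : b ∈ (E : Sym2 W) := by rw [hsE]; exact hb₁
              rw [hEval] at hh
              exact Sym2.mem_iff.mp hh
            have hv : v = a ∨ v = b := by
              have hh : v ∈ (D : Sym2 W) := by rw [hDgi]; exact hgv i
              rw [hDval2] at hh
              exact Sym2.mem_iff.mp hh
            rcases hb₁' with h | h
            · exfalso
              rcases hv with q | q
              · exact hne (by rw [← q, h]; exact Sym2.eq_swap)
              · exact huv.ne (q.trans h).symm
            · exact h
          refine ⟨(phiL X X' u v u' v') f₁, (eB X X' u v u' v'), phiL_ne_B (hne_val hf₁E), ?_, ?_, ?_⟩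
          · ext Hv
            simp only [Set.mem_setOf_eq, Set.mem_insert_iff, Set.mem_singleton_iff]
            rw [hdchar Hv]
            constructor
            · rintro (⟨yv, hyv, rfl⟩ | ⟨-, q2⟩ | ⟨q1, -⟩)
              · have hq := (hNp yv).mp hyv
                rcases hq.1 with h | h
                · exact Or.inl (by rw [h])
                · exact absurd (h.trans hsE.symm) hq.2
              · exact Or.inr q2
              · exact absurd q1 hDfi
            · rintro (rfl | rfl)
              · exact Or.inl ⟨f₁, (hNp f₁).mpr ⟨Or.inl rfl, hf₁E⟩, rfl⟩
              · exact Or.inr (Or.inl ⟨hDgi, rfl⟩)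
          · rw [phiL_val (hne_val hf₁E), Sym2.mem_map]
            exact ⟨a, ha₁, rfl⟩
          · rw [hb2]
            simp [eB]
      · have hf₁E : f₁ ≠ E := by
          intro hcon
          rcases (hchar f₁).mp ((hset₁' f₁).mpr (Or.inl rfl)) with h | ⟨q1, -⟩ | ⟨q1, -⟩
          · exact hnotEpw f₁ h hcon
          · exact hDfi q1
          · exact hDgi q1
        have hg₁E : g₁ ≠ E := by
          intro hcon
          rcases (hchar g₁).mp ((hset₁' g₁).mpr (Or.inr rfl)) with h | ⟨q1, -⟩ | ⟨q1, -⟩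
          · exact hnotEpw g₁ h hcon
          · exact hDfi q1
          · exact hDgi q1
        have hNp : ∀ yv, s(D, yv) ∈ (pw i).edges ↔ (yv = f₁ ∨ yv = g₁) := by
          intro yv
          constructor
          · intro hyv
            exact (hset₁' yv).mp ((hchar yv).mpr (Or.inl hyv))
          · intro hin
            rcases (hchar yv).mp ((hset₁' yv).mpr hin) with h | ⟨q1, -⟩ | ⟨q1, -⟩
            · exact h
            · exact absurd q1 hDfi
            · exact absurd q1 hDgi
        refine ⟨(phiL X X' u v u' v') f₁, (phiL X X' u v u' v') g₁, ?_, ?_, ?_, ?_⟩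
        · intro hcon
          exact hf₁g₁ (phiL_injOn (hne_val hf₁E) (hne_val hg₁E) hcon)
        · ext Hv
          simp only [Set.mem_setOf_eq, Set.mem_insert_iff, Set.mem_singleton_iff]
          rw [hdchar Hv]
          constructor
          · rintro (⟨yv, hyv, rfl⟩ | ⟨q1, -⟩ | ⟨q1, -⟩)
            · rcases (hNp yv).mp hyv with h | h
              · exact Or.inl (by rw [h])
              · exact Or.inr (by rw [h])
            · exact absurd q1 hDgi
            · exact absurd q1 hDfi
          · rintro (rfl | rfl)
            · exact Or.inl ⟨f₁, (hNp f₁).mpr (Or.inl rfl), rfl⟩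
            · exact Or.inl ⟨g₁, (hNp g₁).mpr (Or.inr rfl), rfl⟩
        · rw [phiL_val (hne_val hf₁E), Sym2.mem_map]
          exact ⟨a, ha₁, rfl⟩
        · rw [phiL_val (hne_val hg₁E), Sym2.mem_map]
          exact ⟨b, hb₁, rfl⟩
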